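/- Let p be a real polynomial of even degree n ≥ 2. Then ♯_r[(n−1)(p')² − n·p·p''] + ♯_r p = 0 if and only if p has no real zeros, p' has exactly one real zero w, which is simple, so that p'(x) = C(x)·(x−w) for a real polynomial C with C(w) ≠ 0, and the polynomial (n−1)·C(x)²·(x−w)² − n·p(x)·C'(x)·(x−w) − n·C(x)·p(x) has no real zeros. -/

import Mathlib

open Polynomial Filter Topology

lemma sign_same (f : Polynomial ℝ) (hf : ∀ x, f.eval x ≠ 0) (x y : ℝ) :
    0 < f.eval x * f.eval y := by
  rcases lt_or_gt_of_ne (hf x) with hx | hx <;> rcases lt_or_gt_of_ne (hf y) with hy | hy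
  · exact mul_pos_of_neg_of_neg hx hy
  · exfalso
    have : (0:ℝ) ∈ Set.uIcc (f.eval x) (f.eval y) := Set.mem_uIcc.2 (Or.inl ⟨hx.le, hy.le⟩)
    obtain ⟨z, _, hz⟩ := intermediate_value_uIcc (f.continuous_aeval.continuousOn) this
    exact hf z hz
  · exfalso
    have : (0:ℝ) ∈ Set.uIcc (f.eval x) (f.eval y) := Set.mem_uIcc.2 (Or.inr ⟨hy.le, hx.le⟩)
    obtain ⟨z, _, hz⟩ := intermediate_value_uIcc (f.continuous_aeval.continuousOn) this
    exact hf z hz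
  · exact mul_pos hx hy

lemma exists_root_of_odd_pos (f : Polynomial ℝ) (h : Odd f.natDegree)
    (hlc : 0 < f.leadingCoeff) : ∃ x, f.eval x = 0 := by
  have hne : f ≠ 0 := fun hf => by simp [hf] at hlc
  have hd : 0 < f.degree := by
    rw [← natDegree_pos_iff_degree_pos]
    exact h.pos
  obtain ⟨b, hb⟩ := (f.tendsto_atTop_of_leadingCoeff_nonneg hd hlc.le).eventually_ge_atTop 1
    |>.exists
  set g := f.comp (-X) with hg
  have hgd : g.natDegree = f.natDegree := by
    rw [hg, natDegree_comp]
    simp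
  have hglc : g.leadingCoeff = -f.leadingCoeff := by
    rw [hg, leadingCoeff_comp (by simp)]
    simp [h.neg_one_pow]
  have hgdeg : 0 < g.degree := by
    rw [← natDegree_pos_iff_degree_pos, hgd]
    exact h.pos
  obtain ⟨a, ha⟩ := (g.tendsto_atBot_of_leadingCoeff_nonpos hgdeg
    (by rw [hglc]; linarith)).eventually_le_atBot (-1) |>.exists
  rw [hg, eval_comp] at ha
  simp only [eval_neg, eval_X] at ha
  have : (0:ℝ) ∈ Set.uIcc (f.eval (-a)) (f.eval b) := Set.mem_uIcc.2 (Or.inl ⟨by linarith, by linarith⟩)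
  obtain ⟨z, _, hz⟩ := intermediate_value_uIcc (f.continuous_aeval.continuousOn) this
  exact ⟨z, hz⟩

lemma exists_root_of_odd (f : Polynomial ℝ) (h : Odd f.natDegree) (hne : f ≠ 0) :
    ∃ x, f.eval x = 0 := by
  rcases lt_or_gt_of_ne (leadingCoeff_ne_zero.2 hne) with hlc | hlc
  · obtain ⟨x, hx⟩ := exists_root_of_odd_pos (-f) (by simpa using h) (by simpa using hlc)
    exact ⟨x, by simpa using hx⟩
  · exact exists_root_of_odd_pos f h hlc

lemma exists_pos_right (f : Polynomial ℝ) (a m : ℝ) (ham : a < m) (h0 : f.eval a = 0)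
    (h1 : 0 < f.derivative.eval a) : ∃ x, a < x ∧ x < m ∧ 0 < f.eval x := by
  have hder := (f.hasDerivAt a)
  rw [hasDerivAt_iff_tendsto_slope] at hder
  have hev : ∀ᶠ x in 𝓝[≠] a, 0 < slope (fun x => f.eval x) a x :=
    hder.eventually (eventually_gt_nhds h1)
  have hev' : ∀ᶠ x in 𝓝[>] a, 0 < slope (fun x => f.eval x) a x :=
    hev.filter_mono (nhdsWithin_mono _ fun x hx => ne_of_gt hx)
  have hmem : ∀ᶠ x in 𝓝[>] a, x ∈ Set.Ioo a m := Ioo_mem_nhdsGT_of_mem ⟨le_refl a, ham⟩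
  obtain ⟨x, hx1, hx2⟩ := (hev'.and hmem).exists
  refine ⟨x, hx2.1, hx2.2, ?_⟩
  have hxa : 0 < x - a := by linarith [hx2.1]
  have := hx1
  rw [slope_def_field] at this
  have h2 : 0 < (f.eval x - f.eval a) / (x - a) := by
    simpa [div_eq_iff] using this
  rw [h0, sub_zero] at h2
  exact (div_pos_iff.1 h2).resolve_right (fun h => absurd h.2 (by linarith)) |>.1

lemma exists_neg_left (f : Polynomial ℝ) (m b : ℝ) (hmb : m < b) (h0 : f.eval b = 0)
    (h1 : 0 < f.derivative.eval b) : ∃ x, m < x ∧ x < b ∧ f.eval x < 0 := by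
  have hder := (f.hasDerivAt b)
  rw [hasDerivAt_iff_tendsto_slope] at hder
  have hev : ∀ᶠ x in 𝓝[≠] b, 0 < slope (fun x => f.eval x) b x :=
    hder.eventually (eventually_gt_nhds h1)
  have hev' : ∀ᶠ x in 𝓝[<] b, 0 < slope (fun x => f.eval x) b x :=
    hev.filter_mono (nhdsWithin_mono _ fun x hx => ne_of_lt hx)
  have hmem : ∀ᶠ x in 𝓝[<] b, x ∈ Set.Ioo m b := Ioo_mem_nhdsLT_of_mem ⟨hmb, le_refl b⟩
  obtain ⟨x, hx1, hx2⟩ := (hev'.and hmem).exists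
  refine ⟨x, hx2.1, hx2.2, ?_⟩
  have hxb : x - b < 0 := by linarith [hx2.2]
  have := hx1
  rw [slope_def_field, h0] at this
  rcases div_pos_iff.1 this with ⟨h2, h3⟩ | ⟨h2, h3⟩
  · linarith
  · linarith

lemma q_zero_contra (p : Polynomial ℝ) (hdeg : 2 ≤ p.natDegree)
    (hid : Polynomial.C ((p.natDegree : ℝ) - 1) * (derivative p) ^ 2 =
      Polynomial.C (p.natDegree : ℝ) * p * derivative (derivative p))
    (w : ℝ) (hw : (derivative p).eval w = 0) (hpw : p.eval w ≠ 0) : False := by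
  have hn : (p.natDegree : ℝ) ≠ 0 := by positivity
  have key : ∀ k : ℕ, (derivative^[k + 1] p).eval w = 0 := by
    intro k
    induction k using Nat.strong_induction_on with
    | _ k IH =>
      match k with
      | 0 => simpa using hw
      | (j + 1) =>
        have h2 := congrArg (fun f => (derivative^[j] f).eval w) hid
        have hL : (derivative^[j] (Polynomial.C ((p.natDegree : ℝ) - 1) * (derivative p) ^ 2)).eval w = 0 := by
          rw [Polynomial.iterate_derivative_C_mul, sq, Polynomial.iterate_derivative_mul,
            eval_mul, eval_C, eval_finset_sum]
          rw [Finset.sum_eq_zero, mul_zero]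
          intro i hi
          have hij := Finset.mem_range.1 hi
          rw [eval_smul, eval_mul, ← Function.iterate_succ_apply derivative i p]
          rw [IH i (by omega), mul_zero, smul_zero]
        have hR : (derivative^[j] (Polynomial.C ((p.natDegree : ℝ)) * p * derivative (derivative p))).eval w
            = (p.natDegree : ℝ) * (p.eval w * (derivative^[j + 2] p).eval w) := by
          rw [mul_assoc, Polynomial.iterate_derivative_C_mul, Polynomial.iterate_derivative_mul,
            eval_mul, eval_C, eval_finset_sum, Finset.sum_range_succ]
          rw [Finset.sum_eq_zero]
          · simp only [Nat.sub_self, Function.iterate_zero, id_eq, Nat.choose_self, one_smul,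
              eval_smul, eval_mul, zero_add, smul_eq_mul, one_mul]
            rw [show j + 2 = j + 1 + 1 from rfl, Function.iterate_succ_apply,
              Function.iterate_succ_apply]
          · intro i hi
            have hij : i < j := Finset.mem_range.1 hi
            rw [eval_smul, eval_mul]
            have : j - i = (j - i - 1) + 1 := by omega
            rw [this, IH (j - i - 1) (by omega), zero_mul, smul_zero]
        rw [hL, hR] at h2
        have := (mul_eq_zero.1 h2.symm).resolve_left hn
        have := (mul_eq_zero.1 this).resolve_left hpw
        simpa [Function.iterate_succ_apply'] using this
  have hco : ∀ k : ℕ, 0 < k → (Polynomial.taylor w p).coeff k = 0 := by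
    intro k hk
    have hk1 : k = (k - 1) + 1 := by omega
    rw [Polynomial.taylor_coeff]
    have h1 : (Nat.factorial k) • (Polynomial.hasseDeriv k p).eval w = (derivative^[k] p).eval w := by
      rw [← Polynomial.eval_smul]
      congr 1
      exact congrFun (Polynomial.factorial_smul_hasseDeriv (R := ℝ) (k := k)) p
    have h0 : (derivative^[k] p).eval w = 0 := by rw [hk1]; exact key (k - 1)
    rw [h0, nsmul_eq_mul] at h1
    have hf : ((Nat.factorial k : ℕ) : ℝ) ≠ 0 := by exact_mod_cast Nat.factorial_ne_zero k
    exact (mul_eq_zero.1 h1).resolve_left hf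
  have : (Polynomial.taylor w p).natDegree ≤ 0 :=
    Polynomial.natDegree_le_iff_coeff_eq_zero.2 fun N hN => hco N hN
  rw [Polynomial.natDegree_taylor] at this
  omega

theorem shapiro_conj12_zero_iff (p : Polynomial ℝ)
    (hdeg : 2 ≤ p.natDegree) (heven : Even p.natDegree) :
    ((Polynomial.C ((p.natDegree : ℝ) - 1) * (derivative p) ^ 2 -
        Polynomial.C (p.natDegree : ℝ) * p *
          derivative (derivative p)).roots.toFinset.card
      + p.roots.toFinset.card) = 0 ↔
      ((∀ x : ℝ, p.eval x ≠ 0) ∧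
        ∃ (w : ℝ) (c : Polynomial ℝ),
          derivative p = c * (X - Polynomial.C w) ∧
          c.eval w ≠ 0 ∧
          (∀ x : ℝ, (derivative p).eval x = 0 → x = w) ∧
          ∀ x : ℝ,
            (Polynomial.C ((p.natDegree : ℝ) - 1) * c ^ 2 * (X - Polynomial.C w) ^ 2 -
             Polynomial.C (p.natDegree : ℝ) * p * derivative c * (X - Polynomial.C w) -
             Polynomial.C (p.natDegree : ℝ) * c * p).eval x ≠ 0) := by
  have hp0 : p ≠ 0 := fun h => by simp [h] at hdeg
  set q : Polynomial ℝ := Polynomial.C ((p.natDegree : ℝ) - 1) * (derivative p) ^ 2 -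
      Polynomial.C (p.natDegree : ℝ) * p * derivative (derivative p) with hqdef
  constructor
  · intro h
    have h1 : q.roots = 0 := by
      have := Nat.eq_zero_of_add_eq_zero_right h
      rwa [Finset.card_eq_zero, Multiset.toFinset_eq_empty] at this
    have h2 : p.roots = 0 := by
      have := Nat.eq_zero_of_add_eq_zero_left h
      rwa [Finset.card_eq_zero, Multiset.toFinset_eq_empty] at this
    have hpne : ∀ x : ℝ, p.eval x ≠ 0 := by
      intro x hx
      have : x ∈ p.roots := mem_roots'.2 ⟨hp0, hx⟩
      rw [h2] at this
      exact absurd this (Multiset.notMem_zero x)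
    -- the derivative has odd degree and hence has a root
    have hd1 : (derivative p).natDegree = p.natDegree - 1 := by
      have := degree_derivative_eq p (by omega)
      exact natDegree_eq_of_degree_eq_some this
    have hodd : Odd (derivative p).natDegree := by
      rw [hd1]
      rcases heven with ⟨m, hm⟩
      exact ⟨m - 1, by omega⟩
    have hd0 : derivative p ≠ 0 := by
      intro hd
      rw [hd] at hd1
      simp at hd1
      omega
    obtain ⟨w, hw⟩ := exists_root_of_odd (derivative p) hodd hd0
    -- q is not the zero polynomial
    have hqne0 : q ≠ 0 := by
      intro hq0
      rw [hqdef, sub_eq_zero] at hq0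
      exact q_zero_contra p hdeg hq0 w hw (hpne w)
    have hqne : ∀ x : ℝ, q.eval x ≠ 0 := by
      intro x hx
      have : x ∈ q.roots := mem_roots'.2 ⟨hqne0, hx⟩
      rw [h1] at this
      exact absurd this (Multiset.notMem_zero x)
    -- at any root of p', the second derivative is nonzero
    have hqeval : ∀ x : ℝ, (derivative p).eval x = 0 →
        q.eval x = -((p.natDegree : ℝ) * (p.eval x * (derivative (derivative p)).eval x)) := by
      intro x hx
      rw [hqdef]
      simp [hx]
      ring
    have hsec : ∀ x : ℝ, (derivative p).eval x = 0 →
        (derivative (derivative p)).eval x ≠ 0 := by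
      intro x hx hxx
      apply hqne x
      rw [hqeval x hx, hxx]
      ring
    -- no two distinct roots of p'
    have hnpos : (0:ℝ) < (p.natDegree : ℝ) := by positivity
    have key2 : ∀ a b : ℝ, a < b → (derivative p).eval a = 0 →
        (derivative p).eval b = 0 → False := by
      intro a b hab ha hb
      set S := ((derivative p).roots.toFinset.filter (fun x => a < x)) with hS
      have hbS : b ∈ S := by
        rw [hS, Finset.mem_filter, Multiset.mem_toFinset]
        exact ⟨mem_roots'.2 ⟨hd0, hb⟩, hab⟩
      have hSne : S.Nonempty := ⟨b, hbS⟩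
      set b' := S.min' hSne with hb'def
      have hb'S : b' ∈ S := S.min'_mem hSne
      have hab' : a < b' := (Finset.mem_filter.1 hb'S).2
      have hb'root : (derivative p).eval b' = 0 :=
        (mem_roots'.1 (Multiset.mem_toFinset.1 (Finset.mem_filter.1 hb'S).1)).2
      have hnoroot : ∀ z : ℝ, a < z → z < b' → (derivative p).eval z ≠ 0 := by
        intro z hz1 hz2 hz
        have : z ∈ S := by
          rw [hS, Finset.mem_filter, Multiset.mem_toFinset]
          exact ⟨mem_roots'.2 ⟨hd0, hz⟩, hz1⟩
        exact absurd (S.min'_le z this) (by linarith)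
      -- second derivative has the same sign at a and b'
      have hsign : 0 < (derivative (derivative p)).eval a *
          (derivative (derivative p)).eval b' := by
        have e1 := hqeval a ha
        have e2 := hqeval b' hb'root
        have s1 := sign_same q hqne a b'
        have s2 := sign_same p hpne a b'
        have hden : 0 < ((p.natDegree : ℝ)) ^ 2 * (p.eval a * p.eval b') :=
          mul_pos (pow_pos hnpos 2) s2
        have h4 : (derivative (derivative p)).eval a * (derivative (derivative p)).eval b' =
            (q.eval a * q.eval b') / (((p.natDegree : ℝ)) ^ 2 * (p.eval a * p.eval b')) := by
          rw [e1, e2]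
          field_simp [hpne a, hpne b']
        rw [h4]
        exact div_pos s1 hden
      set m := (a + b') / 2 with hm
      have ham : a < m := by rw [hm]; linarith
      have hmb : m < b' := by rw [hm]; linarith
      rcases lt_or_gt_of_ne (hsec a ha) with hA | hA
      · -- p'' a < 0, hence p'' b' < 0
        have hB : (derivative (derivative p)).eval b' < 0 := by nlinarith
        obtain ⟨x, hx1, hx2, hx3⟩ := exists_pos_right (-(derivative p)) a m ham
          (by simp [ha]) (by simpa using hA)
        obtain ⟨y, hy1, hy2, hy3⟩ := exists_neg_left (-(derivative p)) m b' hmb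
          (by simp [hb'root]) (by simpa using hB)
        rw [eval_neg] at hx3 hy3
        have h0m : (0:ℝ) ∈ Set.uIcc ((derivative p).eval x) ((derivative p).eval y) :=
          Set.mem_uIcc.2 (Or.inl ⟨by linarith, by linarith⟩)
        obtain ⟨z, hz1, hz2⟩ := intermediate_value_uIcc
          ((derivative p).continuous_aeval.continuousOn) h0m
        rw [Set.uIcc_of_le (by linarith : x ≤ y)] at hz1
        exact hnoroot z (by linarith [hz1.1]) (by linarith [hz1.2]) hz2
      · -- p'' a > 0, hence p'' b' > 0
        have hB : 0 < (derivative (derivative p)).eval b' := by nlinarith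
        obtain ⟨x, hx1, hx2, hx3⟩ := exists_pos_right (derivative p) a m ham ha hA
        obtain ⟨y, hy1, hy2, hy3⟩ := exists_neg_left (derivative p) m b' hmb hb'root hB
        have h0m : (0:ℝ) ∈ Set.uIcc ((derivative p).eval x) ((derivative p).eval y) :=
          Set.mem_uIcc.2 (Or.inr ⟨by linarith, by linarith⟩)
        obtain ⟨z, hz1, hz2⟩ := intermediate_value_uIcc
          ((derivative p).continuous_aeval.continuousOn) h0m
        rw [Set.uIcc_of_le (by linarith : x ≤ y)] at hz1
        exact hnoroot z (by linarith [hz1.1]) (by linarith [hz1.2]) hz2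
    have huniq : ∀ x : ℝ, (derivative p).eval x = 0 → x = w := by
      intro x hx
      by_contra hxw
      rcases lt_or_gt_of_ne hxw with h' | h'
      · exact key2 x w h' hx hw
      · exact key2 w x h' hw hx
    -- factor the derivative
    have hdvd : (X - Polynomial.C w) * (derivative p /ₘ (X - Polynomial.C w)) = derivative p :=
      (mul_divByMonic_eq_iff_isRoot).2 hw
    set c := derivative p /ₘ (X - Polynomial.C w) with hcdef
    have hfac : derivative p = c * (X - Polynomial.C w) := by rw [← hdvd]; ring
    have hder2 : derivative (derivative p) =
        derivative c * (X - Polynomial.C w) + c := by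
      rw [hfac, derivative_mul, derivative_X_sub_C, mul_one]
    have hcw : c.eval w ≠ 0 := by
      intro hc
      apply hsec w hw
      rw [hder2]
      simp [hc]
    refine ⟨hpne, w, c, hfac, hcw, huniq, ?_⟩
    intro x
    have hQq : Polynomial.C ((p.natDegree : ℝ) - 1) * c ^ 2 * (X - Polynomial.C w) ^ 2 -
        Polynomial.C (p.natDegree : ℝ) * p * derivative c * (X - Polynomial.C w) -
        Polynomial.C (p.natDegree : ℝ) * c * p = q := by
      rw [hqdef, hfac, derivative_mul, derivative_X_sub_C, mul_one]
      ring
    rw [hQq]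
    exact hqne x
  · rintro ⟨hpne, w, c, hfac, hcw, huniq, hQ⟩
    have hder2 : derivative (derivative p) =
        derivative c * (X - Polynomial.C w) + c := by
      rw [hfac, derivative_mul, derivative_X_sub_C, mul_one]
    have hQq : Polynomial.C ((p.natDegree : ℝ) - 1) * c ^ 2 * (X - Polynomial.C w) ^ 2 -
        Polynomial.C (p.natDegree : ℝ) * p * derivative c * (X - Polynomial.C w) -
        Polynomial.C (p.natDegree : ℝ) * c * p = q := by
      rw [hqdef, hfac, derivative_mul, derivative_X_sub_C, mul_one]
      ring
    have hqne : ∀ x : ℝ, q.eval x ≠ 0 := by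
      intro x
      rw [← hQq]
      exact hQ x
    have h1 : q.roots = 0 := by
      rw [Multiset.eq_zero_iff_forall_notMem]
      intro x hx
      exact hqne x (mem_roots'.1 hx).2
    have h2 : p.roots = 0 := by
      rw [Multiset.eq_zero_iff_forall_notMem]
      intro x hx
      exact hpne x (mem_roots'.1 hx).2
    rw [h1, h2]
    simp
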